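/- arXiv:0901.2703 — 3 statements merged into one kernel-verified Lean document; each statement's English description precedes it below -/
import Mathlib

section
/- For every Nayak quantum finite automaton (NQFA) with n states, there exists a generalized probabilistic finite automaton (GPFA) with O(n^2) states (i.e., at most n^2 + c states for a fixed constant c) whose acceptance value function on strings equals the acceptance probability function of the NQFA. -/
open Matrix
noncomputable section

/-- A generalized probabilistic finite automaton over alphabet `Alph`:
an initial real row vector, a real transition matrix per symbol, and a final column vector. -/
structure GPFA (Alph : Type) where
  m : ℕ
  v : Fin m → ℝ
  A : Alph → Matrix (Fin m) (Fin m) ℝ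
  f : Fin m → ℝ

/-- The value of a GPFA on a word `w = σ₁⋯σ_k` is `v A_{σ₁} ⋯ A_{σ_k} f`. -/
def GPFA.val {Alph : Type} (G : GPFA Alph) (w : List Alph) : ℝ :=
  G.v ⬝ᵥ ((w.map G.A).prod).mulVec G.f
/-- A Nayak quantum finite automaton: on each symbol it applies a unitary `U σ`,
then the projective measurement `{P σ i}`, then the projective measurement with
outcomes accept/reject/non-halting given by orthogonal projections `Pa, Pr, Pn`. -/
structure NQFA (Alph : Type) where
  n : ℕ
  U : Alph → Matrix (Fin n) (Fin n) ℂ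
  hU : ∀ σ, U σ ∈ Matrix.unitaryGroup (Fin n) ℂ
  outcomes : ℕ
  P : Alph → Fin outcomes → Matrix (Fin n) (Fin n) ℂ
  hP_herm : ∀ σ i, (P σ i).IsHermitian
  hP_idem : ∀ σ i, P σ i * P σ i = P σ i
  hP_sum : ∀ σ, ∑ i, P σ i = 1
  Pa : Matrix (Fin n) (Fin n) ℂ
  Pr : Matrix (Fin n) (Fin n) ℂ
  Pn : Matrix (Fin n) (Fin n) ℂ
  hPa : Pa.IsHermitian ∧ Pa * Pa = Pa
  hPr : Pr.IsHermitian ∧ Pr * Pr = Pr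
  hPn : Pn.IsHermitian ∧ Pn * Pn = Pn
  hHalt_sum : Pa + Pr + Pn = 1
  init : Fin n → ℂ
  hinit : ∑ i, Complex.normSq (init i) = 1

namespace NQFA

variable {Alph : Type} (M : NQFA Alph)

/-- The initial density matrix `|q₀⟩⟨q₀|`. -/
def rho0 : Matrix (Fin M.n) (Fin M.n) ℂ :=
  fun i j => M.init i * star (M.init j)

/-- The post-operation density matrix for one symbol: apply the unitary,
then sum over the outcomes of the symbol's projective measurement. -/
def postOp (σ : Alph) (X : Matrix (Fin M.n) (Fin M.n) ℂ) :
    Matrix (Fin M.n) (Fin M.n) ℂ :=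
  ∑ i, M.P σ i * (M.U σ * X * (M.U σ)ᴴ) * (M.P σ i)ᴴ

/-- One full computation step on the state `(ρ, p_acc, p_rej)`: the non-halted
density matrix together with accumulated accept and reject probabilities. -/
def step (s : Matrix (Fin M.n) (Fin M.n) ℂ × ℝ × ℝ) (σ : Alph) :
    Matrix (Fin M.n) (Fin M.n) ℂ × ℝ × ℝ :=
  (M.Pn * M.postOp σ s.1 * M.Pnᴴ,
   s.2.1 + (Matrix.trace (M.Pa * M.postOp σ s.1)).re,
   s.2.2 + (Matrix.trace (M.Pr * M.postOp σ s.1)).re)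

/-- Running the NQFA on a word. -/
def run (w : List Alph) : Matrix (Fin M.n) (Fin M.n) ℂ × ℝ × ℝ :=
  w.foldl M.step (M.rho0, 0, 0)

/-- The acceptance probability function of the NQFA. -/
def accProb (w : List Alph) : ℝ := (M.run w).2.1

/-- The total rejection probability of the NQFA. -/
def rejProb (w : List Alph) : ℝ := (M.run w).2.2

/-- The density matrix of the non-halted part of the computation. -/
def curRho (w : List Alph) : Matrix (Fin M.n) (Fin M.n) ℂ := (M.run w).1

end NQFA

namespace NQFAaux

variable {Alph : Type}

/-- Real-linear encoding of complex matrices into real vectors (faithful on Hermitians). -/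
def encL (n : ℕ) : Matrix (Fin n) (Fin n) ℂ →ₗ[ℝ] ((Fin n × Fin n) → ℝ) where
  toFun X p := if p.1 ≤ p.2 then (X p.1 p.2).re else (X p.1 p.2).im
  map_add' X Y := by
    funext p
    by_cases h : p.1 ≤ p.2 <;> simp [h, Matrix.add_apply]
  map_smul' r X := by
    funext p
    by_cases h : p.1 ≤ p.2 <;>
      simp [h, Matrix.smul_apply, Complex.real_smul, Complex.mul_re, Complex.mul_im]

def decL (n : ℕ) : ((Fin n × Fin n) → ℝ) →ₗ[ℝ] Matrix (Fin n) (Fin n) ℂ where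
  toFun r := Matrix.of fun i j =>
    if i = j then (r (i, i) : ℂ)
    else if i < j then (r (i, j) : ℂ) - (r (j, i) : ℂ) * Complex.I
    else (r (j, i) : ℂ) + (r (i, j) : ℂ) * Complex.I
  map_add' r s := by
    funext i j
    simp only [Matrix.of_apply, Pi.add_apply, Matrix.add_apply]
    split_ifs <;> push_cast <;> ring
  map_smul' c r := by
    funext i j
    simp only [Matrix.of_apply, Pi.smul_apply, Matrix.smul_apply, RingHom.id_apply,
      smul_eq_mul, Complex.real_smul]
    split_ifs <;> push_cast <;> ring

lemma decL_encL {n : ℕ} {X : Matrix (Fin n) (Fin n) ℂ} (hX : X.IsHermitian) :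
    decL n (encL n X) = X := by
  funext i j
  have h : star (X j i) = X i j := congrFun (congrFun hX i) j
  simp only [decL, encL, LinearMap.coe_mk, AddHom.coe_mk, Matrix.of_apply]
  change (Matrix.of _ : Matrix (Fin n) (Fin n) ℂ) i j = X i j
  simp only [Matrix.of_apply]
  rcases lt_trichotomy i j with h1 | h1 | h1
  · rw [if_neg (ne_of_lt h1), if_pos h1, if_pos h1.le, if_neg (not_le.mpr h1)]
    have him : (X j i).im = -(X i j).im := by
      have := congrArg Complex.im h; simp [Complex.star_def] at this; linarith
    apply Complex.ext <;> simp [him]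
  · subst h1
    rw [if_pos rfl, if_pos le_rfl]
    have him : (X i i).im = 0 := by
      have := congrArg Complex.im h; simp [Complex.star_def] at this; linarith
    apply Complex.ext <;> simp [him]
  · rw [if_neg (ne_of_gt h1), if_neg (not_lt.mpr h1.le), if_pos h1.le,
      if_neg (not_le.mpr h1)]
    have hre : (X j i).re = (X i j).re := by
      have := congrArg Complex.re h; simpa [Complex.star_def] using this
    apply Complex.ext <;> simp [hre]

variable (M : NQFA Alph)

def postOpL (σ : Alph) : Matrix (Fin M.n) (Fin M.n) ℂ →ₗ[ℝ] Matrix (Fin M.n) (Fin M.n) ℂ :=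
  ∑ i, (LinearMap.mulLeft ℝ (M.P σ i)).comp
    ((LinearMap.mulRight ℝ (M.P σ i)ᴴ).comp
      ((LinearMap.mulLeft ℝ (M.U σ)).comp (LinearMap.mulRight ℝ (M.U σ)ᴴ)))

lemma postOpL_apply (σ : Alph) (X : Matrix (Fin M.n) (Fin M.n) ℂ) :
    postOpL M σ X = M.postOp σ X := by
  simp [postOpL, NQFA.postOp, LinearMap.sum_apply, LinearMap.mulLeft_apply,
    LinearMap.mulRight_apply, mul_assoc]

def TL (σ : Alph) : Matrix (Fin M.n) (Fin M.n) ℂ →ₗ[ℝ] Matrix (Fin M.n) (Fin M.n) ℂ :=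
  (LinearMap.mulLeft ℝ M.Pn).comp ((LinearMap.mulRight ℝ M.Pnᴴ).comp (postOpL M σ))

lemma TL_apply (σ : Alph) (X : Matrix (Fin M.n) (Fin M.n) ℂ) :
    TL M σ X = M.Pn * M.postOp σ X * M.Pnᴴ := by
  simp [TL, postOpL_apply, mul_assoc]

def FL (σ : Alph) : ((Fin M.n × Fin M.n) → ℝ) →ₗ[ℝ] ((Fin M.n × Fin M.n) → ℝ) :=
  (encL M.n).comp ((TL M σ).comp (decL M.n))

def gL (σ : Alph) : ((Fin M.n × Fin M.n) → ℝ) →ₗ[ℝ] ℝ :=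
  Complex.reLm.comp ((Matrix.traceLinearMap (Fin M.n) ℝ ℂ).comp
    ((LinearMap.mulLeft ℝ M.Pa).comp ((postOpL M σ).comp (decL M.n))))

lemma gL_apply (σ : Alph) (r : (Fin M.n × Fin M.n) → ℝ) :
    gL M σ r = (Matrix.trace (M.Pa * M.postOp σ (decL M.n r))).re := by
  simp [gL, postOpL_apply]

/-- expand a linear map on the pi type over the standard basis -/
lemma expand {α : Type} [Fintype α] [DecidableEq α] {N : Type*} [AddCommMonoid N]
    [Module ℝ N] (L : (α → ℝ) →ₗ[ℝ] N) (r : α → ℝ) :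
    L r = ∑ p, r p • L (fun q => if p = q then 1 else 0) := by
  conv_lhs => rw [pi_eq_sum_univ r]
  rw [map_sum]
  exact Finset.sum_congr rfl fun p _ => L.map_smul _ _

lemma postOp_herm (σ : Alph) {X : Matrix (Fin M.n) (Fin M.n) ℂ} (hX : X.IsHermitian) :
    (M.postOp σ X).IsHermitian := by
  show _ = _
  rw [NQFA.postOp, Matrix.conjTranspose_sum]
  exact Finset.sum_congr rfl fun i _ =>
    (Matrix.isHermitian_mul_mul_conjTranspose _
      (Matrix.isHermitian_mul_mul_conjTranspose _ hX))

lemma rho0_herm : (M.rho0).IsHermitian := by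
  funext i j
  simp [NQFA.rho0, Matrix.conjTranspose_apply, mul_comm]

lemma run_append (w : List Alph) (σ : Alph) :
    M.run (w ++ [σ]) = M.step (M.run w) σ := by
  simp [NQFA.run, List.foldl_append]

lemma curRho_herm (w : List Alph) : (M.curRho w).IsHermitian := by
  induction w using List.reverseRecOn with
  | nil => exact rho0_herm M
  | append_singleton w σ ih =>
      have : M.curRho (w ++ [σ]) = M.Pn * M.postOp σ (M.curRho w) * M.Pnᴴ := by
        simp [NQFA.curRho, run_append, NQFA.step]
      rw [this]
      exact Matrix.isHermitian_mul_mul_conjTranspose _ (postOp_herm M σ ih)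

/-- the abstract (sum-indexed) transition matrix -/
def Atil (σ : Alph) :
    Matrix ((Fin M.n × Fin M.n) ⊕ Unit) ((Fin M.n × Fin M.n) ⊕ Unit) ℝ :=
  Matrix.of fun i j =>
    match i, j with
    | Sum.inl p, Sum.inl q => FL M σ (fun q' => if p = q' then 1 else 0) q
    | Sum.inl p, Sum.inr _ => gL M σ (fun q' => if p = q' then 1 else 0)
    | Sum.inr _, Sum.inl _ => 0
    | Sum.inr _, Sum.inr _ => 1

def vtil : (Fin M.n × Fin M.n) ⊕ Unit → ℝ :=
  Sum.elim (encL M.n M.rho0) (fun _ => 0)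

def ftil : (Fin M.n × Fin M.n) ⊕ Unit → ℝ :=
  Sum.elim 0 (fun _ => 1)

lemma vecMul_Atil (σ : Alph) (s : (Fin M.n × Fin M.n) ⊕ Unit → ℝ) :
    Matrix.vecMul s (Atil M σ) =
      Sum.elim (FL M σ (fun p => s (Sum.inl p)))
        (fun _ => gL M σ (fun p => s (Sum.inl p)) + s (Sum.inr ())) := by
  funext x
  cases x with
  | inl q =>
      simp only [Sum.elim_inl]
      rw [expand (FL M σ)]
      simp [Matrix.vecMul, dotProduct, Fintype.sum_sum_type, Atil,
        Finset.sum_apply, Pi.smul_apply, smul_eq_mul]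
  | inr u =>
      simp only [Sum.elim_inr]
      rw [expand (gL M σ)]
      simp [Matrix.vecMul, dotProduct, Fintype.sum_sum_type, Atil, smul_eq_mul]

lemma key (w : List Alph) :
    Matrix.vecMul (vtil M) ((w.map (Atil M)).prod) =
      Sum.elim (encL M.n (M.curRho w)) (fun _ => M.accProb w) := by
  induction w using List.reverseRecOn with
  | nil =>
      simp [vtil, NQFA.curRho, NQFA.accProb, NQFA.run]
  | append_singleton w σ ih =>
      rw [List.map_append, List.prod_append, List.map_singleton, List.prod_singleton,
        ← Matrix.vecMul_vecMul, ih, vecMul_Atil]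
      simp only [Sum.elim_inl]
      have hdec : decL M.n (encL M.n (M.curRho w)) = M.curRho w :=
        decL_encL (curRho_herm M w)
      have hrho : M.curRho (w ++ [σ]) = M.Pn * M.postOp σ (M.curRho w) * M.Pnᴴ := by
        simp [NQFA.curRho, run_append, NQFA.step]
      have hacc : M.accProb (w ++ [σ]) =
          M.accProb w + (Matrix.trace (M.Pa * M.postOp σ (M.curRho w))).re := by
        simp [NQFA.accProb, run_append, NQFA.step, NQFA.curRho]
      funext x
      cases x with
      | inl q =>
          simp only [Sum.elim_inl, FL, LinearMap.comp_apply, hdec, TL_apply, hrho]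

      | inr u =>
          simp only [Sum.elim_inr, gL_apply, hdec, hacc]
          ring

end NQFAaux

open NQFAaux in
/-- For every NQFA with `n` states there is a GPFA with `O(n²)` states. -/
theorem nqfa_to_gpfa (Alph : Type) :
    ∃ c : ℕ, ∀ M : NQFA Alph, ∃ G : GPFA Alph,
      G.m ≤ M.n ^ 2 + c ∧ ∀ w : List Alph, G.val w = M.accProb w := by
  refine ⟨1, fun M => ?_⟩
  let e : (Fin M.n × Fin M.n) ⊕ Unit ≃ Fin (M.n * M.n + 1) :=
    (Equiv.sumCongr finProdFinEquiv (Equiv.ofUnique Unit (Fin 1))).trans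
      finSumFinEquiv
  refine ⟨⟨M.n * M.n + 1, vtil M ∘ e.symm,
    fun σ => (Atil M σ).submatrix e.symm e.symm, ftil M ∘ e.symm⟩, ?_, fun w => ?_⟩
  · simp [pow_two]
  · have hprod : ∀ w : List Alph,
        (w.map fun σ => (Atil M σ).submatrix e.symm e.symm).prod =
          ((w.map (Atil M)).prod).submatrix e.symm e.symm := by
      intro w
      induction w with
      | nil => simp [Matrix.submatrix_one_equiv]
      | cons σ w ih => simp [ih, Matrix.submatrix_mul_equiv]
    show (vtil M ∘ e.symm) ⬝ᵥ _ = _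
    rw [hprod, Matrix.submatrix_mulVec_equiv]
    have hcomp : (ftil M ∘ e.symm) ∘ e.symm.symm = ftil M := by
      funext x; simp
    rw [hcomp]
    have : (vtil M ∘ e.symm) ⬝ᵥ (((w.map (Atil M)).prod) *ᵥ ftil M) ∘ e.symm
        = vtil M ⬝ᵥ ((w.map (Atil M)).prod) *ᵥ ftil M := by
      simp only [dotProduct, Function.comp_apply]
      exact Fintype.sum_equiv e.symm _ _ fun x => rfl
    rw [this, Matrix.dotProduct_mulVec, key]
    simp [ftil, dotProduct, Fintype.sum_sum_type, NQFA.accProb]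
end
end

section
/- Every language recognized with unbounded error by a Nayak quantum finite automaton is a stochastic language. -/
open Matrix
noncomputable section

/-- A probabilistic finite automaton: row-stochastic matrices, an initial
probability distribution, and a set of accepting states (0/1 final vector). -/
structure PFA (Alph : Type) where
  m : ℕ
  v : Fin m → ℝ
  hv_nonneg : ∀ i, 0 ≤ v i
  hv_sum : ∑ i, v i = 1
  A : Alph → Matrix (Fin m) (Fin m) ℝ
  hA_nonneg : ∀ σ i j, 0 ≤ A σ i j
  hA_rows : ∀ σ i, ∑ j, A σ i j = 1
  F : Finset (Fin m)

/-- Acceptance probability of a PFA on a word. -/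
def PFA.val {Alph : Type} (P : PFA Alph) (w : List Alph) : ℝ :=
  P.v ⬝ᵥ ((w.map P.A).prod).mulVec (fun i => if i ∈ P.F then (1 : ℝ) else 0)

/-- A language is stochastic if it is the strict cutpoint language of some PFA,
with cutpoint `λ ∈ [0,1)`. -/
def IsStochasticLang {Alph : Type} (L : Set (List Alph)) : Prop :=
  ∃ (P : PFA Alph) (lam : ℝ), 0 ≤ lam ∧ lam < 1 ∧ L = { w | lam < P.val w }
/-! ### Auxiliary development: Turakainen's theorem for generalized automata -/

namespace TuraAux

open Matrix

variable {Alph : Type}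

/-- Value of a generalized (real-matrix) finite automaton. -/
def gval {S : Type} [Fintype S] [DecidableEq S] (v : S → ℝ) (A : Alph → Matrix S S ℝ)
    (f : S → ℝ) (w : List Alph) : ℝ :=
  v ⬝ᵥ ((w.map A).prod).mulVec f

section Stages

variable {S : Type} [Fintype S] [DecidableEq S]

/-! #### Stage 1: shift the cutpoint to 0 -/

def A1 (A : Alph → Matrix S S ℝ) : Alph → Matrix (S ⊕ Unit) (S ⊕ Unit) ℝ :=
  fun σ => Matrix.fromBlocks (A σ) 0 0 1

lemma prod_A1 (A : Alph → Matrix S S ℝ) (w : List Alph) :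
    (w.map (A1 A)).prod = Matrix.fromBlocks ((w.map A).prod) 0 0 1 := by
  induction w with
  | nil => simp
  | cons σ w ih => simp [A1, ih, Matrix.fromBlocks_multiply]

lemma gval_A1 (v : S → ℝ) (A : Alph → Matrix S S ℝ) (f : S → ℝ) (lam : ℝ) (w : List Alph) :
    gval (Sum.elim v fun _ => 1) (A1 A) (Sum.elim f fun _ => -lam) w
      = gval v A f w - lam := by
  simp [gval, prod_A1, Matrix.fromBlocks_mulVec, sumElim_dotProduct_sumElim,
    Matrix.one_mulVec, sub_eq_add_neg]

/-! #### Stage 2: make the initial vector a coordinate vector -/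

def A2 (v1 : S → ℝ) (A : Alph → Matrix S S ℝ) : Alph → Matrix (Unit ⊕ S) (Unit ⊕ S) ℝ :=
  fun σ => Matrix.fromBlocks 0 (Matrix.of fun _ j => (v1 ᵥ* A σ) j) 0 (A σ)

lemma vecMul_A2 (v1 : S → ℝ) (A : Alph → Matrix S S ℝ) (w : List Alph) (x : S → ℝ) :
    (Sum.elim (0 : Unit → ℝ) x) ᵥ* (w.map (A2 v1 A)).prod = Sum.elim (0 : Unit → ℝ) (x ᵥ* (w.map A).prod) := by
  induction w generalizing x with
  | nil => simp
  | cons σ w ih =>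
    rw [List.map_cons, List.prod_cons, List.map_cons, List.prod_cons,
      ← Matrix.vecMul_vecMul, ← Matrix.vecMul_vecMul]
    have h : (Sum.elim (0 : Unit → ℝ) x) ᵥ* (A2 v1 A σ) = Sum.elim (0 : Unit → ℝ) (x ᵥ* A σ) := by
      rw [A2, Matrix.vecMul_fromBlocks]
      ext p
      cases p <;> simp
    rw [h, ih]

lemma gval_A2 (v1 : S → ℝ) (A : Alph → Matrix S S ℝ) (f1 : S → ℝ) (w : List Alph) :
    gval (Sum.elim (fun _ : Unit => (1:ℝ)) 0) (A2 v1 A) (Sum.elim (fun _ => v1 ⬝ᵥ f1) f1) w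
      = gval v1 A f1 w := by
  cases w with
  | nil => simp [gval, sumElim_dotProduct_sumElim, dotProduct]
  | cons σ w =>
    rw [gval, gval, List.map_cons, List.prod_cons, List.map_cons, List.prod_cons,
      ← Matrix.mulVec_mulVec, ← Matrix.mulVec_mulVec, Matrix.dotProduct_mulVec,
      Matrix.dotProduct_mulVec]
    have h : (Sum.elim (fun _ : Unit => (1:ℝ)) 0) ᵥ* (A2 v1 A σ) = Sum.elim (0 : Unit → ℝ) (v1 ᵥ* A σ) := by
      rw [A2, Matrix.vecMul_fromBlocks]
      ext p
      cases p <;> simp [Matrix.vecMul, dotProduct]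
    rw [h, vecMul_A2]
    simp [sumElim_dotProduct_sumElim, Matrix.dotProduct_mulVec, Matrix.vecMul_vecMul]

/-! #### Stage 3: make the final vector a 0/1 vector -/

def A3 (A : Alph → Matrix S S ℝ) (f : S → ℝ) : Alph → Matrix (S ⊕ Unit) (S ⊕ Unit) ℝ :=
  fun σ => Matrix.fromBlocks (A σ) (Matrix.of fun i _ => ((A σ).mulVec f) i) 0 0

lemma mulVec_A3 (A : Alph → Matrix S S ℝ) (f : S → ℝ) (w : List Alph) (y : S → ℝ) :
    ((w.map (A3 A f)).prod).mulVec (Sum.elim y (0 : Unit → ℝ)) = Sum.elim (((w.map A).prod).mulVec y) (0 : Unit → ℝ) := by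
  induction w using List.reverseRecOn generalizing y with
  | nil => simp
  | append_singleton w σ ih =>
    rw [List.map_append, List.prod_append, List.map_singleton, List.prod_singleton,
      List.map_append, List.prod_append, List.map_singleton, List.prod_singleton,
      ← Matrix.mulVec_mulVec, ← Matrix.mulVec_mulVec]
    have h : (A3 A f σ).mulVec (Sum.elim y (0 : Unit → ℝ)) = Sum.elim ((A σ).mulVec y) (0 : Unit → ℝ) := by
      rw [A3, Matrix.fromBlocks_mulVec]
      ext p
      cases p <;> simp
    rw [h, ih]

lemma gval_A3_nil (v : S → ℝ) (A : Alph → Matrix S S ℝ) (f : S → ℝ) :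
    gval (Sum.elim v (0 : Unit → ℝ)) (A3 A f) (Sum.elim (0 : S → ℝ) fun _ => 1) [] = 0 := by
  simp [gval, sumElim_dotProduct_sumElim, dotProduct]

lemma gval_A3 (v : S → ℝ) (A : Alph → Matrix S S ℝ) (f : S → ℝ) (w : List Alph)
    (hw : w ≠ []) :
    gval (Sum.elim v (0 : Unit → ℝ)) (A3 A f) (Sum.elim (0 : S → ℝ) fun _ => 1) w = gval v A f w := by
  rcases List.eq_nil_or_concat w with rfl | ⟨w', σ, rfl⟩
  · exact absurd rfl hw
  · rw [List.concat_eq_append, gval, gval, List.map_append, List.prod_append,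
      List.map_singleton, List.prod_singleton, List.map_append, List.prod_append,
      List.map_singleton, List.prod_singleton, ← Matrix.mulVec_mulVec, ← Matrix.mulVec_mulVec]
    have h : (A3 A f σ).mulVec (Sum.elim (0 : S → ℝ) fun _ => 1)
        = Sum.elim ((A σ).mulVec f) (0 : Unit → ℝ) := by
      rw [A3, Matrix.fromBlocks_mulVec]
      ext p
      cases p <;> simp [Matrix.mulVec, dotProduct]
    rw [h, mulVec_A3]
    simp [sumElim_dotProduct_sumElim]

/-! #### Stage 4: make all row and column sums zero -/

def B4 (A : Alph → Matrix S S ℝ) : Alph → Matrix (Unit ⊕ (S ⊕ Unit)) (Unit ⊕ (S ⊕ Unit)) ℝ :=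
  fun σ => Matrix.of fun p q =>
    match p, q with
    | Sum.inl _, _ => 0
    | Sum.inr (Sum.inl i), Sum.inl _ => -∑ j, A σ i j
    | Sum.inr (Sum.inl i), Sum.inr (Sum.inl j) => A σ i j
    | Sum.inr (Sum.inl _), Sum.inr (Sum.inr _) => 0
    | Sum.inr (Sum.inr _), Sum.inl _ => ∑ i, ∑ j, A σ i j
    | Sum.inr (Sum.inr _), Sum.inr (Sum.inl j) => -∑ i, A σ i j
    | Sum.inr (Sum.inr _), Sum.inr (Sum.inr _) => 0

lemma B4_row (A : Alph → Matrix S S ℝ) (σ : Alph) (p : Unit ⊕ (S ⊕ Unit)) :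
    ∑ q, B4 A σ p q = 0 := by
  rcases p with _ | (i | _)
  · simp [B4]
  · simp [B4, Fintype.sum_sum_type]
  · simp only [B4, Fintype.sum_sum_type, Matrix.of_apply]
    simp only [Finset.univ_unique, Finset.sum_singleton, Finset.sum_const_zero, add_zero,
      Finset.sum_neg_distrib]
    rw [Finset.sum_comm]
    ring

lemma B4_col (A : Alph → Matrix S S ℝ) (σ : Alph) (q : Unit ⊕ (S ⊕ Unit)) :
    ∑ p, B4 A σ p q = 0 := by
  rcases q with _ | (j | _)
  · simp [B4, Fintype.sum_sum_type, Finset.sum_neg_distrib]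
  · simp [B4, Fintype.sum_sum_type]
  · simp [B4, Fintype.sum_sum_type]

lemma gval_B4 (v : S → ℝ) (A : Alph → Matrix S S ℝ) (f : S → ℝ) (w : List Alph) :
    gval (Sum.elim (0 : Unit → ℝ) (Sum.elim v (0 : Unit → ℝ))) (B4 A) (Sum.elim (0 : Unit → ℝ) (Sum.elim f (0 : Unit → ℝ))) w
      = gval v A f w := by
  have H : ∀ (w : List Alph) (a : ℝ) (x : S → ℝ),
      ((Sum.elim (fun _ => a) (Sum.elim x (0 : Unit → ℝ))) ᵥ* (w.map (B4 A)).prod) ⬝ᵥ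
        (Sum.elim (0 : Unit → ℝ) (Sum.elim f (0 : Unit → ℝ)))
      = (x ᵥ* (w.map A).prod) ⬝ᵥ f := by
    intro w
    induction w with
    | nil =>
      intro a x
      simp [sumElim_dotProduct_sumElim]
    | cons σ w ih =>
      intro a x
      rw [List.map_cons, List.prod_cons, List.map_cons, List.prod_cons,
        ← Matrix.vecMul_vecMul, ← Matrix.vecMul_vecMul]
      have h : (Sum.elim (fun _ => a) (Sum.elim x (0 : Unit → ℝ))) ᵥ* (B4 A σ)
          = Sum.elim (fun _ => ∑ i, x i * (-∑ j, A σ i j)) (Sum.elim (x ᵥ* A σ) (0 : Unit → ℝ)) := by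
        ext p
        rcases p with _ | (j | _) <;>
          simp [B4, Matrix.vecMul, dotProduct, Fintype.sum_sum_type]
      rw [h, ih]
  rw [gval, gval, Matrix.dotProduct_mulVec, Matrix.dotProduct_mulVec]
  exact H w 0 v

end Stages

/-! #### Stage 5: from a zero-row/column-sum GPFA to a genuine PFA -/

lemma stage5 {S : Type} [Fintype S] [DecidableEq S] [Nonempty S]
    (v : S → ℝ) (B : Alph → Matrix S S ℝ) (f : S → ℝ)
    (hv0 : ∀ i, 0 ≤ v i) (hv1 : ∑ i, v i = 1)
    (hf : ∀ i, f i = 0 ∨ f i = 1) (hfne : ∃ i, f i = 0)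
    (hrow : ∀ σ i, ∑ j, B σ i j = 0) (hcol : ∀ σ j, ∑ i, B σ i j = 0)
    (heps : v ⬝ᵥ f ≤ 0) :
    IsStochasticLang {w | 0 < gval v B f w} := by
  classical
  have hcard : 0 < ((Fintype.card S : ℕ) : ℝ) := by exact_mod_cast Fintype.card_pos
  set N : ℝ := ((Fintype.card S : ℕ) : ℝ) with hNdef
  set c : Alph → ℝ := fun σ => N * (1 + ∑ i, ∑ j, |B σ i j|) with hcdef
  have habs : ∀ σ, (0:ℝ) ≤ ∑ i, ∑ j, |B σ i j| := fun σ =>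
    Finset.sum_nonneg fun i _ => Finset.sum_nonneg fun j _ => abs_nonneg _
  have hc : ∀ σ, 0 < c σ := fun σ => mul_pos hcard (by linarith [habs σ])
  set J : Matrix S S ℝ := Matrix.of (fun _ _ => N⁻¹) with hJdef
  set D : Alph → Matrix S S ℝ := fun σ => J + (c σ)⁻¹ • B σ with hDdef
  have hBbound : ∀ σ i j, |B σ i j| ≤ ∑ i, ∑ j, |B σ i j| := by
    intro σ i j
    calc |B σ i j| ≤ ∑ j', |B σ i j'| :=
          Finset.single_le_sum (f := fun j' => |B σ i j'|) (fun j' _ => abs_nonneg _)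
            (Finset.mem_univ j)
      _ ≤ ∑ i', ∑ j', |B σ i' j'| :=
          Finset.single_le_sum (f := fun i' => ∑ j', |B σ i' j'|)
            (fun i' _ => Finset.sum_nonneg fun _ _ => abs_nonneg _) (Finset.mem_univ i)
  have hD0 : ∀ σ i j, 0 ≤ D σ i j := by
    intro σ i j
    have h1 : |B σ i j| / c σ ≤ N⁻¹ := by
      rw [div_le_iff₀ (hc σ)]
      have h2 : N⁻¹ * (c σ) = 1 + ∑ i, ∑ j, |B σ i j| := by
        rw [hcdef]
        field_simp
      calc |B σ i j| ≤ 1 + ∑ i, ∑ j, |B σ i j| := by linarith [hBbound σ i j]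
        _ = N⁻¹ * c σ := h2.symm
    have h3 : -(N⁻¹) ≤ B σ i j / c σ := by
      have h4 : -(|B σ i j|) / c σ ≤ B σ i j / c σ :=
        (div_le_div_iff_of_pos_right (hc σ)).mpr (neg_abs_le _)
      rw [neg_div] at h4
      linarith
    have h5 : D σ i j = N⁻¹ + B σ i j / c σ := by
      simp [hDdef, hJdef, Matrix.add_apply, Matrix.smul_apply, smul_eq_mul, div_eq_inv_mul]
    rw [h5]
    linarith
  have hDrow : ∀ σ i, ∑ j, D σ i j = 1 := by
    intro σ i
    have : ∀ j, D σ i j = N⁻¹ + (c σ)⁻¹ * B σ i j := by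
      intro j
      simp [hDdef, hJdef, Matrix.add_apply, Matrix.smul_apply, smul_eq_mul]
    simp only [this, Finset.sum_add_distrib, ← Finset.mul_sum, hrow, mul_zero,
      Finset.sum_const, Finset.card_univ, nsmul_eq_mul, add_zero]
    rw [← hNdef, mul_inv_cancel₀ (ne_of_gt hcard)]
  have hJJ : J * J = J := by
    ext i j
    simp only [Matrix.mul_apply, hJdef, Matrix.of_apply, Finset.sum_const,
      Finset.card_univ, nsmul_eq_mul]
    rw [← hNdef]
    field_simp
  have hJB : ∀ σ, J * B σ = 0 := by
    intro σ
    ext i j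
    simp only [Matrix.mul_apply, hJdef, Matrix.of_apply, Matrix.zero_apply, ← Finset.mul_sum,
      hcol, mul_zero]
  have hBJ : ∀ σ, B σ * J = 0 := by
    intro σ
    ext i j
    simp only [Matrix.mul_apply, hJdef, Matrix.of_apply, Matrix.zero_apply, ← Finset.sum_mul,
      hrow, zero_mul]
  have hγpos : ∀ w : List Alph, 0 < (w.map c).prod := by
    intro w
    apply List.prod_pos
    intro x hx
    obtain ⟨σ, -, rfl⟩ := List.mem_map.mp hx
    exact hc σ
  have hprod : ∀ (w : List Alph) (σ : Alph),
      (((w ++ [σ]).map D).prod) = J + (((w ++ [σ]).map c).prod)⁻¹ • (((w ++ [σ]).map B).prod) := by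
    intro w
    induction w using List.reverseRecOn with
    | nil =>
      intro σ
      simp [hDdef]
    | append_singleton w σ' ih =>
      intro σ
      rw [show w ++ [σ'] ++ [σ] = (w ++ [σ']) ++ [σ] from rfl]
      rw [List.map_append (l₂ := [σ]), List.prod_append, List.map_singleton,
        List.prod_singleton, ih σ']
      have hBwJ : ((w ++ [σ']).map B).prod * J = 0 := by
        rw [List.map_append, List.prod_append, List.map_singleton, List.prod_singleton,
          Matrix.mul_assoc, hBJ σ', Matrix.mul_zero]
      rw [hDdef]
      show (J + (((w ++ [σ']).map c).prod)⁻¹ • ((w ++ [σ']).map B).prod) * (J + (c σ)⁻¹ • B σ) = _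
      rw [Matrix.add_mul, Matrix.mul_add, Matrix.mul_add, Matrix.smul_mul, Matrix.smul_mul,
        Matrix.mul_smul, hJJ, hJB, hBwJ, smul_zero, smul_zero, add_zero, zero_add]
      simp only [Matrix.mul_smul, smul_smul, List.map_append, List.prod_append,
        List.map_singleton, List.prod_singleton, mul_inv]
  have hJf : J.mulVec f = fun _ => N⁻¹ * ∑ j, f j := by
    funext i
    simp [hJdef, Matrix.mulVec, dotProduct, Finset.mul_sum]
  have hvJf : v ⬝ᵥ (J.mulVec f) = N⁻¹ * ∑ j, f j := by
    rw [hJf]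
    simp only [dotProduct]
    rw [← Finset.sum_mul, hv1, one_mul]
  have hgvalD : ∀ (w : List Alph) (σ : Alph),
      gval v D f (w ++ [σ])
        = N⁻¹ * ∑ j, f j + (((w ++ [σ]).map c).prod)⁻¹ * gval v B f (w ++ [σ]) := by
    intro w σ
    rw [gval, gval, hprod w σ, Matrix.add_mulVec, dotProduct_add,
      Matrix.smul_mulVec, dotProduct_smul, hvJf, smul_eq_mul]
  have hF0 : 0 ≤ ∑ j, f j := Finset.sum_nonneg fun j _ => by rcases hf j with h | h <;> simp [h]
  have hF1 : ∑ j, f j ≤ N - 1 := by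
    obtain ⟨i0, hi0⟩ := hfne
    have h2 : ∑ j, f j = ∑ j ∈ Finset.univ.erase i0, f j := by
      rw [← Finset.add_sum_erase _ f (Finset.mem_univ i0), hi0, zero_add]
    rw [h2]
    calc ∑ j ∈ Finset.univ.erase i0, f j ≤ ∑ _j ∈ Finset.univ.erase i0, (1:ℝ) :=
          Finset.sum_le_sum (fun j _ => by rcases hf j with h | h <;> simp [h])
      _ = ((Finset.univ.erase i0).card : ℝ) := by simp
      _ ≤ N - 1 := by
          rw [Finset.card_erase_of_mem (Finset.mem_univ i0), Finset.card_univ]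
          rw [hNdef]
          have h3 : 1 ≤ Fintype.card S := Fintype.card_pos
          push_cast [Nat.cast_sub h3]
          simp
  -- the PFA
  let e := Fintype.equivFin S
  refine ⟨⟨Fintype.card S, fun i => v (e.symm i), fun i => hv0 _, ?_,
      fun σ => (D σ).submatrix e.symm e.symm, fun σ i j => hD0 σ _ _, ?_,
      Finset.univ.filter fun i => f (e.symm i) = 1⟩,
    N⁻¹ * ∑ j, f j, ?_, ?_, ?_⟩
  · exact (Equiv.sum_comp e.symm v).trans hv1
  · intro σ i
    exact (Equiv.sum_comp e.symm fun j => D σ (e.symm i) j).trans (hDrow σ (e.symm i))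
  · exact mul_nonneg (inv_nonneg.mpr hcard.le) hF0
  · have : N⁻¹ * ∑ j, f j < N⁻¹ * N := by
      apply mul_lt_mul_of_pos_left _ (inv_pos.mpr hcard)
      linarith
    rwa [inv_mul_cancel₀ (ne_of_gt hcard)] at this
  · -- language equality
    have hind : (fun i => if i ∈ (Finset.univ.filter fun i => f (e.symm i) = 1) then (1:ℝ) else 0)
        = fun i => f (e.symm i) := by
      funext i
      rcases hf (e.symm i) with h | h <;> simp [h]
    have hsub : ∀ w : List Alph,
        (w.map fun σ => (D σ).submatrix e.symm e.symm).prod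
          = ((w.map D).prod).submatrix (e.symm : Fin (Fintype.card S) ≃ S) e.symm := by
      intro w
      induction w with
      | nil => simp
      | cons σ w ih =>
        rw [List.map_cons, List.prod_cons, List.map_cons, List.prod_cons, ih,
          Matrix.submatrix_mul_equiv]
    have hval : ∀ w : List Alph,
        PFA.val ⟨Fintype.card S, fun i => v (e.symm i), fun i => hv0 _,
          (Equiv.sum_comp e.symm v).trans hv1,
          fun σ => (D σ).submatrix e.symm e.symm, fun σ i j => hD0 σ _ _,
          fun σ i => (Equiv.sum_comp e.symm fun j => D σ (e.symm i) j).trans (hDrow σ (e.symm i)),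
          Finset.univ.filter fun i => f (e.symm i) = 1⟩ w = gval v D f w := by
      intro w
      rw [PFA.val, hind, hsub, gval]
      have hmv : (((w.map D).prod).submatrix (e.symm : Fin (Fintype.card S) ≃ S) e.symm).mulVec
          (fun i => f (e.symm i))
          = fun i => (((w.map D).prod).mulVec f) (e.symm i) := by
        have := Matrix.submatrix_mulVec_equiv ((w.map D).prod) (fun i => f (e.symm i))
          (e.symm : Fin (Fintype.card S) → S) (e.symm : Fin (Fintype.card S) ≃ S)
        have h5 : ((fun i => f (e.symm i)) ∘ ⇑e.symm.symm) = f := by funext s; simp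
        rw [h5] at this
        rw [this]
        rfl
      rw [hmv]
      exact Equiv.sum_comp e.symm fun s => v s * (((w.map D).prod).mulVec f) s
    ext w
    simp only [Set.mem_setOf_eq, hval]
    rcases List.eq_nil_or_concat w with rfl | ⟨w', σ, rfl⟩
    · have h1 : gval v D f [] = v ⬝ᵥ f := by simp [gval]
      have h2 : gval v B f [] = v ⬝ᵥ f := by simp [gval]
      rw [h1, h2]
      constructor
      · intro h; linarith
      · intro h
        have : (0:ℝ) ≤ N⁻¹ * ∑ j, f j := mul_nonneg (inv_nonneg.mpr hcard.le) hF0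
        linarith
    · rw [List.concat_eq_append, hgvalD w' σ]
      have hγ : 0 < (((w' ++ [σ]).map c).prod)⁻¹ := inv_pos.mpr (hγpos _)
      constructor
      · intro h
        have := mul_pos hγ h
        linarith
      · intro h
        have h2 : 0 < (((w' ++ [σ]).map c).prod)⁻¹ * gval v B f (w' ++ [σ]) := by linarith
        nlinarith [hγpos (w' ++ [σ])]

/-- The composite initial vector of the four-stage construction. -/
def tv4 (S : Type) : Unit ⊕ (((Unit ⊕ (S ⊕ Unit)) ⊕ Unit) ⊕ Unit) → ℝ :=
  Sum.elim 0 (Sum.elim (Sum.elim (Sum.elim (fun _ : Unit => (1:ℝ)) 0) (0 : Unit → ℝ)) (0 : Unit → ℝ))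

/-- The composite final vector of the four-stage construction. -/
def tf4 (S : Type) : Unit ⊕ (((Unit ⊕ (S ⊕ Unit)) ⊕ Unit) ⊕ Unit) → ℝ :=
  Sum.elim 0 (Sum.elim (Sum.elim (0 : Unit ⊕ (S ⊕ Unit) → ℝ) (fun _ : Unit => (1:ℝ))) (0 : Unit → ℝ))

/-- The composite transition matrices of the four-stage construction. -/
def tA4 {S : Type} [Fintype S] [DecidableEq S] (v : S → ℝ) (A : Alph → Matrix S S ℝ)
    (f : S → ℝ) (lam : ℝ) :
    Alph → Matrix (Unit ⊕ (((Unit ⊕ (S ⊕ Unit)) ⊕ Unit) ⊕ Unit))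
      (Unit ⊕ (((Unit ⊕ (S ⊕ Unit)) ⊕ Unit) ⊕ Unit)) ℝ :=
  B4 (A3 (A2 (Sum.elim v fun _ : Unit => (1:ℝ)) (A1 A))
    (Sum.elim (fun _ : Unit => (Sum.elim v fun _ : Unit => (1:ℝ)) ⬝ᵥ (Sum.elim f fun _ : Unit => -lam))
      (Sum.elim f fun _ : Unit => -lam)))

lemma gval_t4_nil {S : Type} [Fintype S] [DecidableEq S]
    (v : S → ℝ) (A : Alph → Matrix S S ℝ) (f : S → ℝ) (lam : ℝ) :
    gval (tv4 S) (tA4 v A f lam) (tf4 S) [] = 0 := by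
  unfold tv4 tA4 tf4
  rw [gval_B4, gval_A3_nil]

lemma gval_t4 {S : Type} [Fintype S] [DecidableEq S]
    (v : S → ℝ) (A : Alph → Matrix S S ℝ) (f : S → ℝ) (lam : ℝ) (w : List Alph)
    (hw : w ≠ []) :
    gval (tv4 S) (tA4 v A f lam) (tf4 S) w = gval v A f w - lam := by
  unfold tv4 tA4 tf4
  rw [gval_B4, gval_A3 _ _ _ _ hw, gval_A2, gval_A1]

/-- Turakainen's theorem: every GPFA strict cutpoint language (with the empty word
not in the language) is stochastic. -/
lemma turakainen {S : Type} [Fintype S] [DecidableEq S]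
    (v : S → ℝ) (A : Alph → Matrix S S ℝ) (f : S → ℝ) (lam : ℝ)
    (hlam : gval v A f [] ≤ lam) :
    IsStochasticLang {w | lam < gval v A f w} := by
  classical
  have hL : {w : List Alph | lam < gval v A f w}
      = {w | 0 < gval (tv4 S) (tA4 v A f lam) (tf4 S) w} := by
    ext w
    simp only [Set.mem_setOf_eq]
    rcases List.eq_nil_or_concat w with rfl | ⟨w', σ, rfl⟩
    · rw [gval_t4_nil]
      constructor
      · intro h; linarith
      · intro h; linarith
    · rw [gval_t4 _ _ _ _ _ (by simp : w'.concat σ ≠ [])]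
      constructor
      · intro h; linarith
      · intro h; linarith
  rw [hL]
  refine stage5 _ _ _ ?_ ?_ ?_ ?_ ?_ ?_ ?_
  · rintro (u | (((u | s) | u) | u)) <;> simp [tv4] <;> norm_num
  · simp [tv4, Fintype.sum_sum_type]
  · rintro (u | (((p | u) | u) | u)) <;> simp [tf4]
  · exact ⟨Sum.inl (), by simp [tf4]⟩
  · intro σ i
    unfold tA4
    exact B4_row _ σ i
  · intro σ j
    unfold tA4
    exact B4_col _ σ j
  · have h := gval_t4_nil (Alph := Alph) v A f lam
    rw [gval] at h
    simpa using le_of_eq h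

end TuraAux

/-! ### Realification of the NQFA dynamics -/

namespace NQFA

open Matrix

variable {Alph : Type} (M : NQFA Alph)

lemma postOp_add (σ : Alph) (X Y : Matrix (Fin M.n) (Fin M.n) ℂ) :
    M.postOp σ (X + Y) = M.postOp σ X + M.postOp σ Y := by
  simp [postOp, Matrix.mul_add, Matrix.add_mul, Finset.sum_add_distrib]

lemma postOp_smul (σ : Alph) (r : ℝ) (X : Matrix (Fin M.n) (Fin M.n) ℂ) :
    M.postOp σ (r • X) = r • M.postOp σ X := by
  simp [postOp, Matrix.mul_smul, Matrix.smul_mul, Finset.smul_sum]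

/-- The one-step evolution of `(ρ, p_acc)` as an `ℝ`-linear map. -/
def stepL (σ : Alph) : (Matrix (Fin M.n) (Fin M.n) ℂ × ℝ) →ₗ[ℝ] (Matrix (Fin M.n) (Fin M.n) ℂ × ℝ) where
  toFun s := (M.Pn * M.postOp σ s.1 * M.Pnᴴ,
    s.2 + (Matrix.trace (M.Pa * M.postOp σ s.1)).re)
  map_add' s t := by
    ext <;> simp [postOp_add, Matrix.mul_add, Matrix.add_mul] <;> ring
  map_smul' r s := by
    ext
    · simp [postOp_smul, Matrix.mul_smul, Matrix.smul_mul]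
    · simp [postOp_smul, Matrix.trace_smul, Complex.smul_re, smul_eq_mul, mul_add]

/-- The pair (current density matrix, accumulated acceptance probability). -/
def pr (w : List Alph) : Matrix (Fin M.n) (Fin M.n) ℂ × ℝ := ((M.run w).1, (M.run w).2.1)

lemma run_concat (w : List Alph) (σ : Alph) :
    M.run (w ++ [σ]) = M.step (M.run w) σ := by
  simp [run, List.foldl_append]

lemma pr_concat (w : List Alph) (σ : Alph) :
    M.pr (w ++ [σ]) = M.stepL σ (M.pr w) := by
  simp [pr, run_concat, step, stepL]

/-- The real dimension of the state space of the linearized NQFA. -/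
def dim : ℕ := Module.finrank ℝ (Matrix (Fin M.n) (Fin M.n) ℂ × ℝ)

/-- A basis of the state space of the linearized NQFA. -/
def bas : Module.Basis (Fin M.dim) ℝ (Matrix (Fin M.n) (Fin M.n) ℂ × ℝ) :=
  Module.finBasis ℝ (Matrix (Fin M.n) (Fin M.n) ℂ × ℝ)

/-- The (transposed) matrices of the linearized transition maps. -/
def Tmat (σ : Alph) : Matrix (Fin M.dim) (Fin M.dim) ℝ :=
  (LinearMap.toMatrix M.bas M.bas (M.stepL σ))ᵀ

/-- The initial (row) vector of the linearized automaton. -/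
def vG : Fin M.dim → ℝ := ⇑(M.bas.repr (M.pr []))

/-- The final vector of the linearized automaton. -/
def fG : Fin M.dim → ℝ := fun i => (M.bas i).2

lemma repr_dot (x : Matrix (Fin M.n) (Fin M.n) ℂ × ℝ) :
    (⇑(M.bas.repr x)) ⬝ᵥ M.fG = x.2 := by
  calc (⇑(M.bas.repr x)) ⬝ᵥ M.fG = ∑ i, M.bas.repr x i * (M.bas i).2 := rfl
    _ = ∑ i, M.bas.repr x i • (LinearMap.snd ℝ (Matrix (Fin M.n) (Fin M.n) ℂ) ℝ) (M.bas i) := rfl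
    _ = ∑ i, (LinearMap.snd ℝ (Matrix (Fin M.n) (Fin M.n) ℂ) ℝ) (M.bas.repr x i • M.bas i) := by
        simp only [LinearMap.map_smul]
    _ = (LinearMap.snd ℝ (Matrix (Fin M.n) (Fin M.n) ℂ) ℝ) (∑ i, M.bas.repr x i • M.bas i) := by
        rw [map_sum]
    _ = x.2 := by rw [M.bas.sum_repr x]; rfl

lemma vec_key (w : List Alph) :
    M.vG ᵥ* ((w.map M.Tmat).prod) = ⇑(M.bas.repr (M.pr w)) := by
  induction w using List.reverseRecOn with
  | nil => simp [vG]
  | append_singleton w σ ih =>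
    rw [List.map_append, List.prod_append, List.map_singleton, List.prod_singleton,
      ← Matrix.vecMul_vecMul, ih, Tmat, Matrix.vecMul_transpose, pr_concat,
      LinearMap.toMatrix_mulVec_repr]

lemma gval_eq (w : List Alph) :
    TuraAux.gval M.vG M.Tmat M.fG w = M.accProb w := by
  rw [TuraAux.gval, Matrix.dotProduct_mulVec, vec_key, repr_dot]
  rfl

end NQFA

/-- Every language recognized with unbounded error by an NQFA is stochastic. -/
theorem nqfa_unbounded_error_is_stochastic (Alph : Type) (M : NQFA Alph)
    (lam : ℝ) (h0 : 0 ≤ lam) (h1 : lam < 1) :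
    IsStochasticLang { w : List Alph | lam < M.accProb w } := by
  have hnil : M.accProb [] = 0 := rfl
  have h := TuraAux.turakainen M.vG M.Tmat M.fG lam
    (by rw [M.gval_eq, hnil]; exact h0)
  have hset : { w : List Alph | lam < M.accProb w }
      = { w : List Alph | lam < TuraAux.gval M.vG M.Tmat M.fG w } := by
    ext w
    simp only [Set.mem_setOf_eq, M.gval_eq]
  rw [hset]
  exact h
end
end

section
/- The acceptance probability function of any NQFA on word w = σ_1⋯σ_k can be written as a product of matrices: there exist a real row vector u, real matrices B_σ (σ ∈ Σ, each of dimension at most 2n²+2), and a real column vector g, such that the acceptance probability equals u B_{σ_1}⋯B_{σ_k} g, where n is the number of states of the NQFA. -/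
open Matrix
noncomputable section

namespace NQFAaux

variable {Alph : Type} (M : NQFA Alph)

lemma postOp_add (σ : Alph) (X Y : Matrix (Fin M.n) (Fin M.n) ℂ) :
    M.postOp σ (X + Y) = M.postOp σ X + M.postOp σ Y := by
  simp [NQFA.postOp, Matrix.mul_add, Matrix.add_mul, Finset.sum_add_distrib]

lemma postOp_smul (σ : Alph) (r : ℝ) (X : Matrix (Fin M.n) (Fin M.n) ℂ) :
    M.postOp σ (r • X) = r • M.postOp σ X := by
  simp [NQFA.postOp, Matrix.mul_smul, Matrix.smul_mul, Finset.smul_sum]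

/-- One computation step on the pair (non-halted density matrix, accumulated
acceptance probability), as a real-linear map. -/
def stepL (σ : Alph) :
    (Matrix (Fin M.n) (Fin M.n) ℂ × ℝ) →ₗ[ℝ] (Matrix (Fin M.n) (Fin M.n) ℂ × ℝ) where
  toFun s := (M.Pn * M.postOp σ s.1 * M.Pnᴴ,
    s.2 + (Matrix.trace (M.Pa * M.postOp σ s.1)).re)
  map_add' s t := by
    refine Prod.ext ?_ ?_
    · simp [postOp_add, Matrix.mul_add, Matrix.add_mul]
    · simp [postOp_add, Matrix.mul_add, Matrix.trace_add]
      ring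
  map_smul' r s := by
    refine Prod.ext ?_ ?_
    · simp [postOp_smul, Matrix.mul_smul, Matrix.smul_mul]
    · simp [postOp_smul, Matrix.mul_smul, Matrix.trace_smul, Complex.real_smul,
        Complex.re_ofReal_mul, mul_add]

/-- Projection of the full run state to the (ρ, p_acc) pair. -/
def pr (s : Matrix (Fin M.n) (Fin M.n) ℂ × ℝ × ℝ) :
    Matrix (Fin M.n) (Fin M.n) ℂ × ℝ := (s.1, s.2.1)

lemma pr_step (σ : Alph) (s : Matrix (Fin M.n) (Fin M.n) ℂ × ℝ × ℝ) :
    pr M (M.step s σ) = stepL M σ (pr M s) := rfl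

end NQFAaux

/-- The acceptance probability function of an NQFA with `n` states is given by
a product of real matrices of dimension at most `2n² + 2`. -/
theorem nqfa_accProb_matrix_product (Alph : Type) (M : NQFA Alph) :
    ∃ d : ℕ, d ≤ 2 * M.n ^ 2 + 2 ∧
      ∃ (u : Fin d → ℝ) (B : Alph → Matrix (Fin d) (Fin d) ℝ) (g : Fin d → ℝ),
        ∀ w : List Alph, M.accProb w = u ⬝ᵥ ((w.map B).prod).mulVec g := by
  classical
  have hdim : Module.finrank ℝ (Matrix (Fin M.n) (Fin M.n) ℂ × ℝ) = 2 * M.n ^ 2 + 1 := by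
    rw [Module.finrank_prod, Module.finrank_self, Module.finrank_matrix,
      Complex.finrank_real_complex, Fintype.card_fin]
    ring
  refine ⟨Module.finrank ℝ (Matrix (Fin M.n) (Fin M.n) ℂ × ℝ), by omega, ?_⟩
  set d := Module.finrank ℝ (Matrix (Fin M.n) (Fin M.n) ℂ × ℝ) with hd
  let e : (Matrix (Fin M.n) (Fin M.n) ℂ × ℝ) ≃ₗ[ℝ] (Fin d → ℝ) :=
    (Module.finBasis ℝ (Matrix (Fin M.n) (Fin M.n) ℂ × ℝ)).equivFun
  -- The matrices: transpose of the matrix of the step map, so that the word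
  -- acts by `vecMul` from the left in the given order.
  let A : Alph → Matrix (Fin d) (Fin d) ℝ := fun σ =>
    LinearMap.toMatrix' ((e.toLinearMap ∘ₗ NQFAaux.stepL M σ) ∘ₗ e.symm.toLinearMap)
  let B : Alph → Matrix (Fin d) (Fin d) ℝ := fun σ => (A σ)ᵀ
  have hB : ∀ (σ : Alph) (v : Fin d → ℝ),
      v ᵥ* B σ = e (NQFAaux.stepL M σ (e.symm v)) := by
    intro σ v
    show v ᵥ* (A σ)ᵀ = _
    rw [Matrix.vecMul_transpose, ← Matrix.toLin'_apply, Matrix.toLin'_toMatrix']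
    simp
  let u : Fin d → ℝ := e (NQFAaux.pr M (M.rho0, 0, 0))
  -- the readout functional
  let φ : (Matrix (Fin M.n) (Fin M.n) ℂ × ℝ) →ₗ[ℝ] ℝ := LinearMap.snd ℝ _ ℝ
  let g : Fin d → ℝ := fun i => φ (e.symm (fun j => if i = j then 1 else 0))
  refine ⟨u, B, g, ?_⟩
  have key : ∀ (w : List Alph) (s : Matrix (Fin M.n) (Fin M.n) ℂ × ℝ × ℝ),
      e (NQFAaux.pr M (w.foldl M.step s)) = (e (NQFAaux.pr M s)) ᵥ* (w.map B).prod := by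
    intro w
    induction w with
    | nil => intro s; simp
    | cons σ w ih =>
      intro s
      simp only [List.foldl_cons, List.map_cons, List.prod_cons, ← Matrix.vecMul_vecMul]
      rw [ih, hB, NQFAaux.pr_step, LinearEquiv.symm_apply_apply]
  intro w
  have hrun : e (NQFAaux.pr M (M.run w)) = u ᵥ* (w.map B).prod := key w _
  have hφ : ∀ v : (Matrix (Fin M.n) (Fin M.n) ℂ × ℝ), φ v = (e v) ⬝ᵥ g := by
    intro v
    have := (φ.comp e.symm.toLinearMap).pi_apply_eq_sum_univ (e v)
    simp only [LinearMap.comp_apply, LinearEquiv.coe_coe, LinearEquiv.symm_apply_apply] at this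
    rw [this]
    simp [g, dotProduct, smul_eq_mul]
  have hacc : M.accProb w = φ (NQFAaux.pr M (M.run w)) := rfl
  rw [hacc, hφ, hrun, Matrix.dotProduct_mulVec]
end
end
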